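/- Let A be a uniform algebra on a compact Hausdorff space X, B a uniform algebra on Y, and Π : Y → X a continuous surjection with Π*(A) ⊆ B. If E ⊆ X is an intersection of peak sets for A, then Π⁻¹(E) is an intersection of peak sets for B. Consequently, if x is a strong boundary point for A and y is a strong boundary point for the fibre algebra B_x on Π⁻¹({x}), then y is a strong boundary point for B. -/

import Mathlib

/-- A uniform algebra: closed, point-separating, unital subalgebra of C(Z, ℂ). -/
def IsUniformAlgebra {Z : Type*} [TopologicalSpace Z] [CompactSpace Z] [T2Space Z]
    (A : Subalgebra ℂ C(Z, ℂ)) : Prop :=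
  IsClosed (A : Set C(Z, ℂ)) ∧ ∀ z w : Z, z ≠ w → ∃ f ∈ A, f z ≠ f w

/-- `E` is a peak set for `A`. -/
def IsPeakSet {Z : Type*} [TopologicalSpace Z]
    (A : Subalgebra ℂ C(Z, ℂ)) (E : Set Z) : Prop :=
  ∃ f ∈ A, (∀ z ∈ E, f z = 1) ∧ ∀ z ∉ E, ‖f z‖ < 1

/-- `E` is a peak set in the weak sense for `A`: an intersection of a family of peak sets. -/
def IsWeakPeakSet {Z : Type*} [TopologicalSpace Z]
    (A : Subalgebra ℂ C(Z, ℂ)) (E : Set Z) : Prop :=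
  ∃ F : Set (Set Z), (∀ S ∈ F, IsPeakSet A S) ∧ E = ⋂₀ F

/-- `z` is a strong boundary point for `A`: `{z}` is a peak set in the weak sense. -/
def IsStrongBoundaryPoint {Z : Type*} [TopologicalSpace Z]
    (A : Subalgebra ℂ C(Z, ℂ)) (z : Z) : Prop :=
  IsWeakPeakSet A {z}

/-- The uniform closure of the restriction of `B` to the fibre of `proj` over `x`. -/
noncomputable def fibreAlgebra {X Y : Type*} [TopologicalSpace X] [T2Space X]
    [TopologicalSpace Y] [CompactSpace Y]
    (B : Subalgebra ℂ C(Y, ℂ)) (proj : C(Y, X)) (x : X) :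
    Subalgebra ℂ C((proj ⁻¹' {x} : Set Y), ℂ) :=
  haveI : CompactSpace (proj ⁻¹' {x} : Set Y) :=
    isCompact_iff_compactSpace.mp (isClosed_singleton.preimage proj.continuous).isCompact
  (B.map (ContinuousMap.compRightAlgHom ℂ ℂ
    ⟨Subtype.val, continuous_subtype_val⟩)).topologicalClosure

lemma peak_pointwise_le {Z : Type*} [TopologicalSpace Z] {E : Set Z} {f : C(Z,ℂ)}
    (h1 : ∀ z ∈ E, f z = 1) (h2 : ∀ z ∉ E, ‖f z‖ < 1) (z : Z) : ‖f z‖ ≤ 1 := by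
  by_cases hz : z ∈ E
  · rw [h1 z hz]; simp
  · exact (h2 z hz).le

lemma norm_one_add_lt_two {ζ : ℂ} (h1 : ‖ζ‖ ≤ 1) (h2 : ζ ≠ 1) : ‖1 + ζ‖ < 2 := by
  by_contra hcon
  push_neg at hcon
  apply h2
  have hns : Complex.normSq (1 + ζ) = (1 + ζ.re)^2 + ζ.im^2 := by
    rw [Complex.normSq_apply]; simp [Complex.add_re, Complex.add_im]; ring
  have habs : ‖(1:ℂ) + ζ‖^2 = Complex.normSq (1 + ζ) := by
    exact Complex.sq_norm _
  have h4 : (4:ℝ) ≤ (1 + ζ.re)^2 + ζ.im^2 := by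
    rw [← hns, ← habs]; nlinarith [norm_nonneg ((1:ℂ) + ζ)]
  have hz2 : ζ.re^2 + ζ.im^2 ≤ 1 := by
    have : Complex.normSq ζ ≤ 1 := by
      rw [← Complex.sq_norm]
      nlinarith [h1, norm_nonneg ζ]
    rw [Complex.normSq_apply] at this; nlinarith
  have hre : ζ.re = 1 := by nlinarith
  have him : ζ.im = 0 := by nlinarith
  apply Complex.ext <;> simp [hre, him]

lemma pullback_weakPeakSet {X Y : Type*} [TopologicalSpace X] [TopologicalSpace Y]
    (A : Subalgebra ℂ C(X, ℂ)) (B : Subalgebra ℂ C(Y, ℂ)) (proj : C(Y, X))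
    (hext : ∀ g : C(X, ℂ), g ∈ A → g.comp proj ∈ B) :
    ∀ E : Set X, IsWeakPeakSet A E → IsWeakPeakSet B (proj ⁻¹' E) := by
  rintro E ⟨Fam, hFam, hE⟩
  refine ⟨(fun S => proj ⁻¹' S) '' Fam, ?_, ?_⟩
  · rintro S' ⟨S, hS, rfl⟩
    obtain ⟨g, hgA, hg1, hg2⟩ := hFam S hS
    exact ⟨g.comp proj, hext g hgA,
      fun z hz => by simpa using hg1 _ hz,
      fun z hz => by simpa using hg2 _ hz⟩
  · rw [hE, Set.sInter_image, Set.preimage_sInter]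

lemma exists_peak_fn_of_weakPeakSet {Z : Type*} [TopologicalSpace Z] [CompactSpace Z]
    {B : Subalgebra ℂ C(Z, ℂ)} {F V : Set Z} (hF : IsWeakPeakSet B F)
    (hV : IsOpen V) (hFV : F ⊆ V) :
    ∃ q ∈ B, ∃ r : ℝ, 0 ≤ r ∧ r < 1 ∧ (∀ z, ‖q z‖ ≤ 1) ∧ (∀ z ∈ F, q z = 1) ∧
      ∀ z ∉ V, ‖q z‖ ≤ r := by
  obtain ⟨Fam, hFam, hFeq⟩ := hF
  by_cases hVc : Vᶜ = ∅
  · refine ⟨1, one_mem B, 0, le_refl _, by norm_num, by simp, by simp, fun z hz => ?_⟩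
    exact absurd (Set.eq_empty_iff_forall_notMem.mp hVc z) (by simpa using hz)
  · have hKco : IsCompact (Vᶜ) := hV.isClosed_compl.isCompact
    have hKF : ∀ z : Z, z ∈ Vᶜ → ∃ g : C(Z,ℂ), g ∈ B ∧ (∀ w, ‖g w‖ ≤ 1) ∧
        (∀ w ∈ F, g w = 1) ∧ ‖g z‖ < 1 := by
      intro z hz
      have hzF : z ∉ F := fun h => hz (hFV h)
      rw [hFeq, Set.mem_sInter] at hzF
      push_neg at hzF
      obtain ⟨S, hSF, hzS⟩ := hzF
      obtain ⟨g, hgB, hg1, hg2⟩ := hFam S hSF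
      exact ⟨g, hgB, peak_pointwise_le hg1 hg2,
        fun w hw => hg1 w (Set.sInter_subset_of_mem hSF (hFeq ▸ hw)), hg2 z hzS⟩
    choose g hgB hgle hgF hglt using hKF
    have hcover : Vᶜ ⊆ ⋃ i : {z // z ∈ Vᶜ}, {w | ‖g i i.2 w‖ < 1} := by
      intro z hz
      exact Set.mem_iUnion.mpr ⟨⟨z, hz⟩, hglt z hz⟩
    obtain ⟨t, ht⟩ := hKco.elim_finite_subcover (fun i : {z // z ∈ Vᶜ} => {w | ‖g i i.2 w‖ < 1})
      (fun i => by
        have : Continuous fun w => ‖g i i.2 w‖ := (g i i.2).continuous.norm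
        exact isOpen_lt this continuous_const) hcover
    set q : C(Z,ℂ) := ∏ i ∈ t, g i i.2 with hq
    have hqB : q ∈ B := Subalgebra.prod_mem B (fun i _ => hgB i i.2)
    have hqap : ∀ w, q w = ∏ i ∈ t, g i i.2 w := by
      intro w; rw [hq, ContinuousMap.prod_apply]
    have hqle : ∀ w, ‖q w‖ ≤ 1 := by
      intro w
      rw [hqap, norm_prod]
      exact Finset.prod_le_one (fun i _ => norm_nonneg _) (fun i _ => hgle i i.2 w)
    have hqF : ∀ w ∈ F, q w = 1 := by
      intro w hw
      rw [hqap]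
      exact Finset.prod_eq_one (fun i _ => hgF i i.2 w hw)
    have hqlt : ∀ z ∈ Vᶜ, ‖q z‖ < 1 := by
      intro z hz
      obtain ⟨i, hit, hi⟩ := Set.mem_iUnion₂.mp (ht hz)
      classical
      rw [hqap, norm_prod, ← Finset.mul_prod_erase _ _ hit]
      have h1 : ∏ j ∈ t.erase i, ‖g j j.2 z‖ ≤ 1 :=
        Finset.prod_le_one (fun j _ => norm_nonneg _) (fun j _ => hgle j j.2 z)
      have h2 : (0:ℝ) ≤ ∏ j ∈ t.erase i, ‖g j j.2 z‖ :=
        Finset.prod_nonneg (fun j _ => norm_nonneg _)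
      calc ‖g i i.2 z‖ * ∏ j ∈ t.erase i, ‖g j j.2 z‖ ≤ ‖g i i.2 z‖ * 1 :=
            mul_le_mul_of_nonneg_left h1 (norm_nonneg _)
        _ < 1 := by rw [mul_one]; exact hi
    have hKne : (Vᶜ).Nonempty := Set.nonempty_iff_ne_empty.mpr hVc
    obtain ⟨zm, hzm, hmax⟩ := hKco.exists_isMaxOn hKne
      (Continuous.continuousOn ((q.continuous.norm)))
    refine ⟨q, hqB, ‖q zm‖, norm_nonneg _, hqlt zm hzm, hqle, hqF, fun z hz => hmax hz⟩

lemma halfpow_sum_range (N : ℕ) :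
    ∑ k ∈ Finset.range N, (2⁻¹:ℝ)^(k+1) = 1 - (2⁻¹:ℝ)^N := by
  induction N with
  | zero => simp
  | succ n ih => rw [Finset.sum_range_succ, ih, pow_succ]; ring

lemma halfpow_hasSum : HasSum (fun k : ℕ => (2⁻¹:ℝ)^(k+1)) 1 := by
  have h := hasSum_geometric_of_lt_one (show (0:ℝ) ≤ 2⁻¹ by norm_num)
    (show (2⁻¹:ℝ) < 1 by norm_num)
  have h2 := h.mul_left (2⁻¹:ℝ)
  have h3 : (2⁻¹:ℝ) * (1 - 2⁻¹)⁻¹ = 1 := by norm_num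
  rw [h3] at h2
  simpa only [pow_succ'] using h2

lemma halfpow_summable : Summable (fun k : ℕ => (2⁻¹:ℝ)^(k+1)) := halfpow_hasSum.summable

lemma halfpowC_hasSum : HasSum (fun k : ℕ => (2⁻¹:ℂ)^(k+1)) 1 := by
  have hn : ‖(2⁻¹:ℂ)‖ < 1 := by
    rw [norm_inv, RCLike.norm_two]; norm_num
  have h := hasSum_geometric_of_norm_lt_one hn
  have h2 := h.mul_left (2⁻¹:ℂ)
  have h3 : (2⁻¹:ℂ) * (1 - 2⁻¹)⁻¹ = 1 := by norm_num
  rw [h3] at h2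
  simpa only [pow_succ'] using h2

set_option maxHeartbeats 1600000 in
lemma strong_boundary_of_approx {Z : Type*} [TopologicalSpace Z] [CompactSpace Z] [T2Space Z]
    (B : Subalgebra ℂ C(Z, ℂ)) (hBc : IsClosed (B : Set C(Z, ℂ))) (y : Z)
    (H : ∀ C : Set Z, IsCompact C → y ∉ C → ∀ δ : ℝ, 0 < δ → δ < 1 →
      ∃ g ∈ B, g y = 1 ∧ (∀ z, ‖g z‖ ≤ 1 + δ) ∧ ∀ z ∈ C, ‖g z‖ ≤ δ) :
    IsStrongBoundaryPoint B y := by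
  have main : ∀ z₀ : Z, z₀ ≠ y → ∃ P : Set Z, IsPeakSet B P ∧ y ∈ P ∧ z₀ ∉ P := by
    intro z₀ hz₀
    -- choice function
    have hgp : ∀ (C : Set Z) (δ : ℝ), ∃ g : C(Z,ℂ),
        IsCompact C → y ∉ C → 0 < δ → δ < 1 →
          g ∈ B ∧ g y = 1 ∧ (∀ z, ‖g z‖ ≤ 1 + δ) ∧ ∀ z ∈ C, ‖g z‖ ≤ δ := by
      intro C δ
      by_cases h : IsCompact C ∧ y ∉ C ∧ 0 < δ ∧ δ < 1
      · obtain ⟨g, hg1, hg2⟩ := H C h.1 h.2.1 δ h.2.2.1 h.2.2.2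
        exact ⟨g, fun _ _ _ _ => ⟨hg1, hg2⟩⟩
      · exact ⟨1, fun h1 h2 h3 h4 => absurd ⟨h1, h2, h3, h4⟩ h⟩
    choose gpick hgpick using hgp
    -- recursive construction of the sequence
    obtain ⟨Vec, hV0, hVs⟩ : ∃ V : ℕ → List C(Z,ℂ), V 0 = [] ∧ ∀ n, V (n+1) =
        V n ++ [gpick ({z₀} ∪ ⋃ j ∈ Finset.range (V n).length,
          {z | 1 + (4⁻¹:ℝ)^((V n).length+1) ≤ ‖(V n).getD j 1 z‖}) ((8⁻¹:ℝ)^((V n).length+1))] :=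
      ⟨fun n => Nat.rec [] (fun _ l => l ++ [gpick ({z₀} ∪ ⋃ j ∈ Finset.range l.length,
          {z | 1 + (4⁻¹:ℝ)^(l.length+1) ≤ ‖l.getD j 1 z‖}) ((8⁻¹:ℝ)^(l.length+1))]) n,
        rfl, fun n => rfl⟩
    set seq : ℕ → C(Z,ℂ) := fun k => (Vec (k+1)).getD k 1 with hseqdef
    have hlen : ∀ n, (Vec n).length = n := by
      intro n; induction n with
      | zero => simp [hV0]
      | succ n ih => rw [hVs]; simp [ih]
    have hstab : ∀ n k, k < n → (Vec n).getD k 1 = seq k := by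
      intro n
      induction n with
      | zero => intro k hk; omega
      | succ n ih =>
        intro k hk
        rcases Nat.lt_succ_iff_lt_or_eq.mp hk with h | h
        · rw [hVs, List.getD_append _ _ _ _ (by rw [hlen]; exact h), ih k h]
        · subst h; rfl
    set Cs : ℕ → Set Z := fun k => {z₀} ∪ ⋃ j ∈ Finset.range k,
      {z | 1 + (4⁻¹:ℝ)^(k+1) ≤ ‖seq j z‖} with hCsdef
    have hAk : ∀ k, ({z₀} ∪ ⋃ j ∈ Finset.range (Vec k).length,
        {z | 1 + (4⁻¹:ℝ)^((Vec k).length+1) ≤ ‖(Vec k).getD j 1 z‖}) = Cs k := by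
      intro k
      rw [hlen k, hCsdef]
      congr 1
      refine Set.iUnion_congr fun j => Set.iUnion_congr fun hj => ?_
      rw [hstab k j (Finset.mem_range.mp hj)]
    have hspec : ∀ k, seq k ∈ B ∧ seq k y = 1 ∧ (∀ z, ‖seq k z‖ ≤ 1 + (8⁻¹:ℝ)^(k+1)) ∧
        ∀ z ∈ Cs k, ‖seq k z‖ ≤ (8⁻¹:ℝ)^(k+1) := by
      intro k
      induction k using Nat.strong_induction_on with
      | _ k ih =>
      have hCc : IsClosed (Cs k) := by
        rw [hCsdef]
        apply IsClosed.union isClosed_singleton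
        apply Set.Finite.isClosed_biUnion (Finset.range k).finite_toSet
        intro j _
        exact isClosed_le continuous_const ((seq j).continuous.norm)
      have hyC : y ∉ Cs k := by
        rw [hCsdef]
        rintro (h | h)
        · exact hz₀ ((Set.mem_singleton_iff.mp h).symm ▸ rfl)
        · simp only [Set.mem_iUnion] at h
          obtain ⟨j, hj, hle⟩ := h
          have h1 : seq j y = 1 := (ih j (Finset.mem_range.mp hj)).2.1
          simp only [Set.mem_setOf_eq, h1] at hle
          norm_num at hle
          nlinarith [pow_pos (show (0:ℝ) < 4⁻¹ by norm_num) (k+1)]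
      have hkey : seq k = gpick (Cs k) ((8⁻¹:ℝ)^(k+1)) := by
        show (Vec (k+1)).getD k 1 = _
        rw [hVs k, List.getD_append_right _ _ _ _ (le_of_eq (hlen k)), hAk k, hlen k,
          Nat.sub_self]
        rfl
      rw [hkey]
      exact hgpick _ _ hCc.isCompact hyC (by positivity)
        (pow_lt_one₀ (by norm_num) (by norm_num) (Nat.succ_ne_zero k))
    -- the series
    set w : ℕ → ℂ := fun k => (2⁻¹:ℂ)^(k+1) with hw
    have hnw : ∀ k, ‖w k‖ = (2⁻¹:ℝ)^(k+1) := by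
      intro k
      rw [hw]
      simp only [norm_pow, norm_inv, RCLike.norm_two]
    have hseqnorm : ∀ k, ‖seq k‖ ≤ 2 := by
      intro k
      refine (ContinuousMap.norm_le _ (by norm_num)).mpr (fun z => ?_)
      have h1 := (hspec k).2.2.1 z
      have h2 : (8⁻¹:ℝ)^(k+1) ≤ 1 := pow_le_one₀ (by norm_num) (by norm_num)
      linarith
    have hsummable : Summable (fun k => w k • seq k) := by
      apply Summable.of_norm_bounded (halfpow_summable.mul_left 2)
      intro k
      rw [norm_smul, hnw k]
      calc (2⁻¹:ℝ)^(k+1) * ‖seq k‖ ≤ (2⁻¹:ℝ)^(k+1) * 2 :=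
            mul_le_mul_of_nonneg_left (hseqnorm k) (by positivity)
        _ = 2 * (2⁻¹:ℝ)^(k+1) := mul_comm _ _
    set f : C(Z,ℂ) := ∑' k, w k • seq k with hfdef
    have hfB : f ∈ B := by
      refine hBc.mem_of_tendsto hsummable.hasSum.tendsto_sum_nat
        (Filter.Eventually.of_forall (fun n => ?_))
      exact Subalgebra.sum_mem B (fun k _ => Subalgebra.smul_mem B (hspec k).1 _)
    have hfz : ∀ z, HasSum (fun k => w k * seq k z) (f z) := by
      intro z
      have h := ContinuousMap.hasSum_apply hsummable.hasSum z
      simpa using h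
    have hfy : f y = 1 := by
      have h1 := hfz y
      have h2 : (fun k => w k * seq k y) = fun k => (2⁻¹:ℂ)^(k+1) := by
        funext k; rw [(hspec k).2.1, mul_one, hw]
      rw [h2] at h1
      exact h1.unique halfpowC_hasSum
    have hsumnorm : ∀ z, Summable (fun k => (2⁻¹:ℝ)^(k+1) * ‖seq k z‖) := by
      intro z
      apply Summable.of_nonneg_of_le (fun k => by positivity) _ (halfpow_summable.mul_left 2)
      intro k
      have h2 : (8⁻¹:ℝ)^(k+1) ≤ 1 := pow_le_one₀ (by norm_num) (by norm_num)
      have h1 : ‖seq k z‖ ≤ 2 := by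
        have := (hspec k).2.2.1 z; linarith
      have h3 : (0:ℝ) ≤ (2⁻¹:ℝ)^(k+1) := by positivity
      nlinarith
    have hfle : ∀ z, ‖f z‖ ≤ ∑' k, (2⁻¹:ℝ)^(k+1) * ‖seq k z‖ := by
      intro z
      have h1 : ‖f z‖ = ‖∑' k, w k * seq k z‖ := by rw [(hfz z).tsum_eq]
      have heq : (fun k => ‖w k * seq k z‖) = fun k => (2⁻¹:ℝ)^(k+1) * ‖seq k z‖ := by
        funext k; rw [norm_mul, hnw k]
      have h2 : Summable fun k => ‖w k * seq k z‖ := by rw [heq]; exact hsumnorm z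
      rw [h1]
      calc ‖∑' k, w k * seq k z‖ ≤ ∑' k, ‖w k * seq k z‖ := norm_tsum_le_tsum_norm h2
        _ = ∑' k, (2⁻¹:ℝ)^(k+1) * ‖seq k z‖ := by rw [heq]
    have hbound : ∀ (z : Z) (N : ℕ) (s : ℝ), 0 ≤ s →
        (∀ k, ‖seq k z‖ ≤ 1 + s) →
        (∀ k, N ≤ k → ‖seq k z‖ ≤ (8⁻¹:ℝ)^(k+1)) →
        ‖f z‖ ≤ 1 + s - (7/8) * (2⁻¹:ℝ)^N := by
      intro z N s hs hball hsmall
      have hsum := hsumnorm z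
      have hsplit := Summable.sum_add_tsum_nat_add (f := fun k => (2⁻¹:ℝ)^(k+1) * ‖seq k z‖) N hsum
      have hhead : ∑ k ∈ Finset.range N, (2⁻¹:ℝ)^(k+1) * ‖seq k z‖
          ≤ (1+s) * (1 - (2⁻¹:ℝ)^N) := by
        calc ∑ k ∈ Finset.range N, (2⁻¹:ℝ)^(k+1) * ‖seq k z‖
            ≤ ∑ k ∈ Finset.range N, (2⁻¹:ℝ)^(k+1) * (1+s) :=
              Finset.sum_le_sum (fun k _ => mul_le_mul_of_nonneg_left (hball k) (by positivity))
          _ = (∑ k ∈ Finset.range N, (2⁻¹:ℝ)^(k+1)) * (1+s) := by rw [← Finset.sum_mul]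
          _ = (1+s) * (1 - (2⁻¹:ℝ)^N) := by rw [halfpow_sum_range]; ring
      have hsum2 : Summable fun k => (2⁻¹:ℝ)^(k+N+1) * ‖seq (k+N) z‖ :=
        (summable_nat_add_iff N).mpr hsum
      have htailsummand : ∀ k, (2⁻¹:ℝ)^(k+N+1) * ‖seq (k+N) z‖
          ≤ ((2⁻¹:ℝ)^N * 8⁻¹) * (2⁻¹:ℝ)^(k+1) := by
        intro k
        have h1 : ‖seq (k+N) z‖ ≤ (8⁻¹:ℝ)^(k+N+1) := hsmall (k+N) (by omega)
        have h2 : (8⁻¹:ℝ)^(k+N+1) ≤ 8⁻¹ := by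
          calc (8⁻¹:ℝ)^(k+N+1) ≤ (8⁻¹:ℝ)^1 :=
                pow_le_pow_of_le_one (by norm_num) (by norm_num) (by omega)
            _ = 8⁻¹ := pow_one _
        have h3 : (2⁻¹:ℝ)^(k+N+1) = (2⁻¹:ℝ)^N * (2⁻¹:ℝ)^(k+1) := by
          rw [← pow_add]; congr 1; omega
        calc (2⁻¹:ℝ)^(k+N+1) * ‖seq (k+N) z‖ ≤ (2⁻¹:ℝ)^(k+N+1) * 8⁻¹ :=
              mul_le_mul_of_nonneg_left (le_trans h1 h2) (by positivity)
          _ = ((2⁻¹:ℝ)^N * 8⁻¹) * (2⁻¹:ℝ)^(k+1) := by rw [h3]; ring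
      have htail : ∑' k, (2⁻¹:ℝ)^(k+N+1) * ‖seq (k+N) z‖ ≤ (2⁻¹:ℝ)^N * 8⁻¹ := by
        calc ∑' k, (2⁻¹:ℝ)^(k+N+1) * ‖seq (k+N) z‖
            ≤ ∑' k, ((2⁻¹:ℝ)^N * 8⁻¹) * (2⁻¹:ℝ)^(k+1) :=
              Summable.tsum_le_tsum htailsummand hsum2 (halfpow_summable.mul_left _)
          _ = ((2⁻¹:ℝ)^N * 8⁻¹) * ∑' k, (2⁻¹:ℝ)^(k+1) := tsum_mul_left
          _ = (2⁻¹:ℝ)^N * 8⁻¹ := by rw [halfpow_hasSum.tsum_eq]; ring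
      have hfz2 := hfle z
      have hp : (0:ℝ) < (2⁻¹:ℝ)^N := by positivity
      have hple : (2⁻¹:ℝ)^N ≤ 1 := pow_le_one₀ (by norm_num) (by norm_num)
      -- note: hsplit has shift form f (i + N); our tail uses k+N (same)
      nlinarith [hsplit, hhead, htail, hfz2]
    have hz₀small : ∀ k, ‖seq k z₀‖ ≤ (8⁻¹:ℝ)^(k+1) := by
      intro k
      refine (hspec k).2.2.2 z₀ ?_
      rw [hCsdef]
      exact Set.mem_union_left _ rfl
    have hz₀lt : ‖f z₀‖ < 1 := by
      calc ‖f z₀‖ ≤ ∑' k, (2⁻¹:ℝ)^(k+1) * ‖seq k z₀‖ := hfle z₀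
        _ ≤ ∑' k, (2⁻¹:ℝ)^(k+1) * 8⁻¹ := by
            refine Summable.tsum_le_tsum (fun k => ?_) (hsumnorm z₀) (halfpow_summable.mul_right _)
            have h2 : (8⁻¹:ℝ)^(k+1) ≤ 8⁻¹ := by
              calc (8⁻¹:ℝ)^(k+1) ≤ (8⁻¹:ℝ)^1 :=
                    pow_le_pow_of_le_one (by norm_num) (by norm_num) (by omega)
                _ = 8⁻¹ := pow_one _
            exact mul_le_mul_of_nonneg_left (le_trans (hz₀small k) h2) (by positivity)
        _ = 8⁻¹ := by rw [tsum_mul_right, halfpow_hasSum.tsum_eq, one_mul]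
        _ < 1 := by norm_num
    have hle1 : ∀ z, ‖f z‖ ≤ 1 := by
      intro z
      by_cases hA : ∀ k, ‖seq k z‖ ≤ 1
      · calc ‖f z‖ ≤ ∑' k, (2⁻¹:ℝ)^(k+1) * ‖seq k z‖ := hfle z
          _ ≤ ∑' k, (2⁻¹:ℝ)^(k+1) := by
              refine Summable.tsum_le_tsum (fun k => ?_) (hsumnorm z) halfpow_summable
              have h1 := hA k
              have h3 : (0:ℝ) ≤ (2⁻¹:ℝ)^(k+1) := by positivity
              nlinarith
          _ = 1 := halfpow_hasSum.tsum_eq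
      · push_neg at hA
        obtain ⟨j₀, hj₀⟩ := hA
        obtain ⟨n₁, hn₁⟩ := exists_pow_lt_of_lt_one
          (show (0:ℝ) < ‖seq j₀ z‖ - 1 by linarith) (show (8⁻¹:ℝ) < 1 by norm_num)
        obtain ⟨j', hj'mem, hj'max⟩ := Finset.exists_max_image (Finset.range (max n₁ j₀ + 1))
          (fun k => ‖seq k z‖) ⟨j₀, Finset.mem_range.mpr (by omega)⟩
        have hj'lt := Finset.mem_range.mp hj'mem
        have hjstar : ∀ k, ‖seq k z‖ ≤ ‖seq j' z‖ := by
          intro k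
          by_cases hk : k < max n₁ j₀ + 1
          · exact hj'max k (Finset.mem_range.mpr hk)
          · have h2 : (8⁻¹:ℝ)^(k+1) ≤ (8⁻¹:ℝ)^n₁ :=
              pow_le_pow_of_le_one (by norm_num) (by norm_num) (by omega)
            have h3 := (hspec k).2.2.1 z
            have h4 : ‖seq j₀ z‖ ≤ ‖seq j' z‖ := hj'max j₀ (Finset.mem_range.mpr (by omega))
            linarith
        have hspos : (0:ℝ) < ‖seq j' z‖ - 1 := by
          have h5 : ‖seq j₀ z‖ ≤ ‖seq j' z‖ := hjstar j₀
          linarith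
        have hνex : ∃ n : ℕ, (4⁻¹:ℝ)^(n+1) < ‖seq j' z‖ - 1 := by
          obtain ⟨n, hn⟩ := exists_pow_lt_of_lt_one hspos (show (4⁻¹:ℝ) < 1 by norm_num)
          exact ⟨n, lt_of_le_of_lt
            (pow_le_pow_of_le_one (by norm_num) (by norm_num) (by omega)) hn⟩
        obtain ⟨N, hN1, hNj', hNβ, hsb⟩ :
            ∃ N : ℕ, 1 ≤ N ∧ j' < N ∧ (∀ k, N ≤ k → (4⁻¹:ℝ)^(k+1) < ‖seq j' z‖ - 1) ∧
              ‖seq j' z‖ - 1 < (7/8) * (2⁻¹:ℝ)^N := by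
          set ν := Nat.find hνex with hνdef
          have hνspec : (4⁻¹:ℝ)^(ν+1) < ‖seq j' z‖ - 1 := Nat.find_spec hνex
          rcases le_or_gt ν (j'+1) with hc | hc
          · refine ⟨j'+1, by omega, by omega, fun k hk => ?_, ?_⟩
            · exact lt_of_le_of_lt
                (pow_le_pow_of_le_one (by norm_num) (by norm_num) (by omega)) hνspec
            · have h1 : ‖seq j' z‖ - 1 ≤ (8⁻¹:ℝ)^(j'+1) := by
                have := (hspec j').2.2.1 z; linarith
              have h3 : (8⁻¹:ℝ)^(j'+1) = (4⁻¹:ℝ)^(j'+1) * (2⁻¹:ℝ)^(j'+1) := by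
                rw [← mul_pow]; norm_num
              have h4 : (4⁻¹:ℝ)^(j'+1) ≤ 4⁻¹ := by
                calc (4⁻¹:ℝ)^(j'+1) ≤ (4⁻¹:ℝ)^1 :=
                      pow_le_pow_of_le_one (by norm_num) (by norm_num) (by omega)
                  _ = 4⁻¹ := pow_one _
              nlinarith [pow_pos (show (0:ℝ) < 2⁻¹ by norm_num) (j'+1)]
          · have hν1 : 1 ≤ ν := by omega
            refine ⟨ν, by omega, by omega, fun k hk => ?_, ?_⟩
            · exact lt_of_le_of_lt
                (pow_le_pow_of_le_one (by norm_num) (by norm_num) (by omega)) hνspec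
            · have hν2 : ν - 1 < Nat.find hνex := by rw [← hνdef]; omega
              have hmin := Nat.find_min hνex hν2
              push_neg at hmin
              have hexp : (ν-1)+1 = ν := by omega
              rw [hexp] at hmin
              have h3 : (4⁻¹:ℝ)^ν = (2⁻¹:ℝ)^ν * (2⁻¹:ℝ)^ν := by rw [← mul_pow]; norm_num
              have h4 : (2⁻¹:ℝ)^ν ≤ 2⁻¹ := by
                calc (2⁻¹:ℝ)^ν ≤ (2⁻¹:ℝ)^1 :=
                      pow_le_pow_of_le_one (by norm_num) (by norm_num) hν1
                  _ = 2⁻¹ := pow_one _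
              nlinarith [pow_pos (show (0:ℝ) < 2⁻¹ by norm_num) ν]
        have hsmall : ∀ k, N ≤ k → ‖seq k z‖ ≤ (8⁻¹:ℝ)^(k+1) := by
          intro k hk
          refine (hspec k).2.2.2 z ?_
          rw [hCsdef]
          refine Set.mem_union_right _ ?_
          simp only [Set.mem_iUnion]
          refine ⟨j', Finset.mem_range.mpr (by omega), ?_⟩
          have := hNβ k hk
          simp only [Set.mem_setOf_eq]
          linarith
        have hball : ∀ k, ‖seq k z‖ ≤ 1 + (‖seq j' z‖ - 1) := by
          intro k; have := hjstar k; linarith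
        have hb := hbound z N (‖seq j' z‖ - 1) hspos.le hball hsmall
        have hp : (0:ℝ) < (2⁻¹:ℝ)^N := by positivity
        linarith
    -- build the peak function
    set p : C(Z,ℂ) := (2⁻¹:ℂ) • ((1:C(Z,ℂ)) + f) with hpdef
    have hpB : p ∈ B := Subalgebra.smul_mem B (add_mem (one_mem B) hfB) _
    have hpap : ∀ z, p z = 2⁻¹ * (1 + f z) := by
      intro z; rw [hpdef]; simp; ring
    have hhalf : ‖(2⁻¹:ℂ)‖ = 2⁻¹ := by rw [norm_inv, RCLike.norm_two]
    have hpy : p y = 1 := by rw [hpap, hfy]; norm_num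
    have hplt : ∀ z, p z ≠ 1 → ‖p z‖ < 1 := by
      intro z hz
      have h2 : f z ≠ 1 := by
        intro h; apply hz; rw [hpap, h]; norm_num
      have h3 := norm_one_add_lt_two (hle1 z) h2
      rw [hpap, norm_mul, hhalf]
      linarith
    have hpz₀ : p z₀ ≠ 1 := by
      intro h
      have h1 : ‖p z₀‖ = 1 := by rw [h]; simp
      have h3 : ‖(1:ℂ) + f z₀‖ < 2 := by
        calc ‖(1:ℂ) + f z₀‖ ≤ ‖(1:ℂ)‖ + ‖f z₀‖ := norm_add_le _ _
          _ < 2 := by simp only [norm_one]; linarith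
      have h2 : ‖p z₀‖ < 1 := by rw [hpap, norm_mul, hhalf]; linarith
      linarith
    exact ⟨{v | p v = 1}, ⟨p, hpB, fun v hv => hv, fun v hv => hplt v hv⟩, hpy,
      fun h => hpz₀ h⟩
  -- conclude
  refine ⟨{S | IsPeakSet B S ∧ y ∈ S}, fun S hS => hS.1, ?_⟩
  ext z
  simp only [Set.mem_singleton_iff, Set.mem_sInter, Set.mem_setOf_eq]
  constructor
  · rintro rfl S ⟨_, hyS⟩; exact hyS
  · intro h
    by_contra hne
    obtain ⟨P, hP, hyP, hzP⟩ := main z hne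
    exact hzP (h P ⟨hP, hyP⟩)

set_option maxHeartbeats 1600000 in
theorem fibre_strong_boundary_aux {X Y : Type*}
    [TopologicalSpace X] [CompactSpace X] [T2Space X]
    [TopologicalSpace Y] [CompactSpace Y] [T2Space Y]
    (A : Subalgebra ℂ C(X, ℂ))
    (B : Subalgebra ℂ C(Y, ℂ)) (hB : IsClosed (B : Set C(Y, ℂ)))
    (proj : C(Y, X))
    (hext : ∀ g : C(X, ℂ), g ∈ A → g.comp proj ∈ B) :
    (∀ (x : X) (y : (proj ⁻¹' {x} : Set Y)),
      IsStrongBoundaryPoint A x → IsStrongBoundaryPoint (fibreAlgebra B proj x) y →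
        IsStrongBoundaryPoint B (y : Y)) := by
  intro x y hx hy
  haveI hFcs : CompactSpace (proj ⁻¹' {x} : Set Y) :=
    isCompact_iff_compactSpace.mp (isClosed_singleton.preimage proj.continuous).isCompact
  have hFweak : IsWeakPeakSet B (proj ⁻¹' {x}) :=
    pullback_weakPeakSet A B proj hext {x} hx
  apply strong_boundary_of_approx B hB
  intro C hC hyC δ hδ0 hδ1
  set ε : ℝ := δ/8 with hεdef
  have hε0 : 0 < ε := by rw [hεdef]; positivity
  have hε8 : ε < 1/8 := by rw [hεdef]; linarith
  -- fibre peak function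
  set D : Set (proj ⁻¹' {x} : Set Y) := Subtype.val ⁻¹' C with hDdef
  have hDc : IsClosed D := hC.isClosed.preimage continuous_subtype_val
  have hyD : y ∉ D := hyC
  obtain ⟨q1, hq1mem, r1, hr10, hr11, hq1le, hq1one, hq1small⟩ :=
    exists_peak_fn_of_weakPeakSet (B := fibreAlgebra B proj x) hy hDc.isOpen_compl
      (by intro v hv; rw [Set.mem_singleton_iff] at hv; subst hv; exact hyD)
  obtain ⟨m, hm⟩ := exists_pow_lt_of_lt_one hε0 hr11
  have humem : q1^m ∈ fibreAlgebra B proj x := pow_mem hq1mem m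
  have huy : (q1^m) y = 1 := by
    rw [ContinuousMap.pow_apply, hq1one y rfl, one_pow]
  have hule : ∀ v, ‖(q1^m) v‖ ≤ 1 := fun v => by
    rw [ContinuousMap.pow_apply, norm_pow]
    exact pow_le_one₀ (norm_nonneg _) (hq1le v)
  have huD : ∀ v ∈ D, ‖(q1^m) v‖ ≤ ε := by
    intro v hv
    rw [ContinuousMap.pow_apply, norm_pow]
    calc ‖q1 v‖^m ≤ r1^m :=
          pow_le_pow_left₀ (norm_nonneg _) (hq1small v (Set.notMem_compl_iff.mpr hv)) m
      _ ≤ ε := hm.le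
  -- approximate by an element of B
  have hclos : q1^m ∈ closure ((↑(B.map (ContinuousMap.compRightAlgHom ℂ ℂ
      (⟨Subtype.val, continuous_subtype_val⟩ : C((proj ⁻¹' {x} : Set Y), Y)))) :
      Set C((proj ⁻¹' {x} : Set Y), ℂ))) := by
    have h := humem
    unfold fibreAlgebra at h
    rw [← SetLike.mem_coe, Subalgebra.topologicalClosure_coe] at h
    exact h
  rw [Metric.mem_closure_iff] at hclos
  obtain ⟨b', hb'mem, hb'd⟩ := hclos ε hε0
  obtain ⟨b, hbB, hbeq⟩ := Subalgebra.mem_map.mp hb'mem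
  have hbF : ∀ v : (proj ⁻¹' {x} : Set Y), ‖b ↑v - (q1^m) v‖ < ε := by
    intro v
    have h1 : dist ((q1^m) v) (b' v) ≤ dist (q1^m) b' := ContinuousMap.dist_apply_le_dist v
    have h2 : b' v = b ↑v := by rw [← hbeq]; rfl
    calc ‖b ↑v - (q1^m) v‖ = dist ((q1^m) v) (b' v) := by
          rw [h2, dist_eq_norm, norm_sub_rev]
      _ ≤ dist (q1^m) b' := h1
      _ < ε := hb'd
  have hby : ‖b ↑y - 1‖ < ε := by have h := hbF y; rwa [huy] at h
  have hbFle : ∀ v : (proj ⁻¹' {x} : Set Y), ‖b ↑v‖ ≤ 1 + ε := by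
    intro v
    have h0 := norm_sub_norm_le (b ↑v) ((q1^m) v)
    have h1 := hule v
    have h2 := (hbF v).le
    linarith
  have hbC : ∀ v : (proj ⁻¹' {x} : Set Y), (↑v ∈ C) → ‖b ↑v‖ ≤ 2*ε := by
    intro v hv
    have h0 := norm_sub_norm_le (b ↑v) ((q1^m) v)
    have h1 := huD v hv
    have h2 := (hbF v).le
    linarith
  -- the open neighbourhood V of the fibre
  set V : Set Y := {z | ‖b z‖ < 1 + 2*ε} ∩ ((Cᶜ) ∪ {z | ‖b z‖ < 3*ε}) with hVdef
  have hVopen : IsOpen V := by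
    apply IsOpen.inter
    · exact isOpen_lt (b.continuous.norm) continuous_const
    · exact IsOpen.union hC.isClosed.isOpen_compl
        (isOpen_lt (b.continuous.norm) continuous_const)
  have hFV : proj ⁻¹' {x} ⊆ V := by
    intro z hz
    constructor
    · have h := hbFle ⟨z, hz⟩
      simp only [Set.mem_setOf_eq]
      linarith
    · by_cases hzC : z ∈ C
      · right
        have h := hbC ⟨z, hz⟩ hzC
        simp only [Set.mem_setOf_eq]
        linarith
      · left; exact hzC
  obtain ⟨q, hqB, r, hr0, hr1, hqle, hqF, hqsmall⟩ :=
    exists_peak_fn_of_weakPeakSet hFweak hVopen hFV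
  have hbnorm0 : (0:ℝ) < ‖b‖ + 1 := by positivity
  obtain ⟨n, hn⟩ := exists_pow_lt_of_lt_one (show 0 < ε/(‖b‖+1) by positivity) hr1
  have hrn : (‖b‖+1) * r^n ≤ ε := by
    rw [lt_div_iff₀ hbnorm0] at hn
    nlinarith
  set g₀ : C(Y,ℂ) := b * q^n with hg₀def
  have hg₀B : g₀ ∈ B := mul_mem hbB (pow_mem hqB n)
  have hg₀ap : ∀ z, g₀ z = b z * (q z)^n := fun z => by
    rw [hg₀def]; simp [ContinuousMap.pow_apply]
  have hg₀y : g₀ ↑y = b ↑y := by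
    rw [hg₀ap, hqF ↑y y.2, one_pow, mul_one]
  have hoffV : ∀ z, z ∉ V → ‖g₀ z‖ ≤ ε := by
    intro z hz
    rw [hg₀ap, norm_mul, norm_pow]
    calc ‖b z‖ * ‖q z‖^n ≤ (‖b‖+1) * r^n := by
          apply mul_le_mul (le_trans (b.norm_coe_le_norm z) (by linarith))
            (pow_le_pow_left₀ (norm_nonneg _) (hqsmall z hz) n) (by positivity) (by positivity)
      _ ≤ ε := hrn
  have hg₀le : ∀ z, ‖g₀ z‖ ≤ 1 + 2*ε := by
    intro z
    by_cases hz : z ∈ V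
    · have h1 : ‖b z‖ < 1 + 2*ε := hz.1
      rw [hg₀ap, norm_mul, norm_pow]
      have h2 : ‖q z‖^n ≤ 1 := pow_le_one₀ (norm_nonneg _) (hqle z)
      nlinarith [norm_nonneg (b z), pow_nonneg (norm_nonneg (q z)) n]
    · have h := hoffV z hz; linarith
  have hg₀C : ∀ z ∈ C, ‖g₀ z‖ ≤ 3*ε := by
    intro z hzC
    by_cases hz : z ∈ V
    · rcases hz.2 with h | h
      · exact absurd hzC h
      · rw [hg₀ap, norm_mul, norm_pow]
        have h2 : ‖q z‖^n ≤ 1 := pow_le_one₀ (norm_nonneg _) (hqle z)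
        have h3 : ‖b z‖ < 3*ε := h
        nlinarith [norm_nonneg (b z), pow_nonneg (norm_nonneg (q z)) n]
    · have h := hoffV z hz; linarith
  -- normalize
  have hcne : b ↑y ≠ 0 := by
    intro h
    rw [h] at hby
    simp only [zero_sub, norm_neg, norm_one] at hby
    linarith
  have hcnorm : 1 - ε ≤ ‖b ↑y‖ := by
    have h2 := norm_sub_norm_le (1:ℂ) (b ↑y)
    rw [norm_one, norm_sub_rev] at h2
    linarith [hby]
  have hc0 : 0 < ‖b ↑y‖ := norm_pos_iff.mpr hcne
  refine ⟨(b ↑y)⁻¹ • g₀, Subalgebra.smul_mem B hg₀B _, ?_, ?_, ?_⟩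
  · show ((b ↑y)⁻¹ • g₀) ↑y = 1
    rw [ContinuousMap.smul_apply, hg₀y, smul_eq_mul]
    exact inv_mul_cancel₀ hcne
  · intro z
    show ‖((b ↑y)⁻¹ • g₀) z‖ ≤ 1 + δ
    rw [ContinuousMap.smul_apply, norm_smul, norm_inv]
    rw [inv_mul_le_iff₀ hc0]
    have h1 := hg₀le z
    have h3 : (1:ℝ) + 2*ε ≤ (1-ε)*(1+δ) := by rw [hεdef]; nlinarith
    nlinarith [mul_le_mul_of_nonneg_right hcnorm (show (0:ℝ) ≤ 1+δ by linarith)]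
  · intro z hzC
    show ‖((b ↑y)⁻¹ • g₀) z‖ ≤ δ
    rw [ContinuousMap.smul_apply, norm_smul, norm_inv]
    rw [inv_mul_le_iff₀ hc0]
    have h1 := hg₀C z hzC
    have h3 : (3:ℝ)*ε ≤ (1-ε)*δ := by rw [hεdef]; nlinarith
    nlinarith [mul_le_mul_of_nonneg_right hcnorm hδ0.le]

theorem weak_peak_sets_and_strong_boundary_points_lift {X Y : Type*}
    [TopologicalSpace X] [CompactSpace X] [T2Space X]
    [TopologicalSpace Y] [CompactSpace Y] [T2Space Y]
    (A : Subalgebra ℂ C(X, ℂ)) (hA : IsUniformAlgebra A)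
    (B : Subalgebra ℂ C(Y, ℂ)) (hB : IsUniformAlgebra B)
    (proj : C(Y, X)) (hsurj : Function.Surjective proj)
    (hext : ∀ g : C(X, ℂ), g ∈ A → g.comp proj ∈ B) :
    (∀ E : Set X, IsWeakPeakSet A E → IsWeakPeakSet B (proj ⁻¹' E)) ∧
    (∀ (x : X) (y : (proj ⁻¹' {x} : Set Y)),
      IsStrongBoundaryPoint A x → IsStrongBoundaryPoint (fibreAlgebra B proj x) y →
        IsStrongBoundaryPoint B (y : Y)) := by
  exact ⟨pullback_weakPeakSet A B proj hext,
    fun x y hx hy => fibre_strong_boundary_aux A B hB.1 proj hext x y hx hy⟩
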